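/- For all positive integers n, the total number of 231-patterns in all 132-avoiding permutations of length n equals the total number of 312-patterns in all 132-avoiding permutations of length n. -/

import Mathlib

/-- `f` picks out an occurrence of the pattern `q` in the permutation `p`. -/
def IsOcc {n k : ℕ} (q : Fin k → ℕ) (p : Equiv.Perm (Fin n)) (f : Fin k → Fin n) : Prop :=
  StrictMono f ∧ ∀ a b : Fin k, q a < q b ↔ (p (f a) : ℕ) < (p (f b) : ℕ)

def ContainsPat {n k : ℕ} (q : Fin k → ℕ) (p : Equiv.Perm (Fin n)) : Prop :=
  ∃ f, IsOcc q p f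

/-- `p` avoids the pattern 132. -/
def Avoids132 {n : ℕ} (p : Equiv.Perm (Fin n)) : Prop :=
  ¬ ContainsPat (![1, 3, 2] : Fin 3 → ℕ) p

/-- The number of occurrences of the pattern `q` in the permutation `p`. -/
noncomputable def occCnt {n k : ℕ} (q : Fin k → ℕ) (p : Equiv.Perm (Fin n)) : ℕ :=
  Nat.card {f : Fin k → Fin n // IsOcc q p f}

open scoped Classical in
/-- The total number of occurrences of the pattern `q` in all
132-avoiding permutations of length `n`. -/
noncomputable def S132 (n : ℕ) {k : ℕ} (q : Fin k → ℕ) : ℕ :=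
  ∑ p ∈ Finset.univ.filter (fun p : Equiv.Perm (Fin n) => Avoids132 p), occCnt q p

lemma isOcc_map {n k : ℕ} (q1 q2 : Fin k → ℕ) (e : Equiv.Perm (Fin k))
    (hA : ∀ a b : Fin k, q1 (e a) < q1 (e b) ↔ a < b)
    (hB : ∀ a b : Fin k, q2 a < q2 b ↔ e a < e b)
    (p : Equiv.Perm (Fin n)) (f : Fin k → Fin n) (hf : IsOcc q1 p f) :
    IsOcc q2 p⁻¹ (⇑p ∘ f ∘ ⇑e) := by
  obtain ⟨hmono, hpat⟩ := hf
  constructor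
  · intro a b hab
    have h := (hpat (e a) (e b)).mp ((hA a b).mpr hab)
    exact h
  · intro a b
    simp only [Function.comp_apply, Equiv.Perm.coe_inv, Equiv.symm_apply_apply]
    rw [hB]
    rw [← Fin.lt_def, hmono.lt_iff_lt]

/-- Occurrences of `q1` in `p` biject with occurrences of `q2` in `p⁻¹`,
given a suitable permutation `e` relating the patterns. -/
def occEquiv {n k : ℕ} (q1 q2 : Fin k → ℕ) (e : Equiv.Perm (Fin k))
    (hA : ∀ a b : Fin k, q1 (e a) < q1 (e b) ↔ a < b)
    (hB : ∀ a b : Fin k, q2 a < q2 b ↔ e a < e b)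
    (p : Equiv.Perm (Fin n)) :
    {f : Fin k → Fin n // IsOcc q1 p f} ≃ {g : Fin k → Fin n // IsOcc q2 p⁻¹ g} where
  toFun f := ⟨⇑p ∘ f.1 ∘ ⇑e, isOcc_map q1 q2 e hA hB p f.1 f.2⟩
  invFun g := ⟨⇑p⁻¹ ∘ g.1 ∘ ⇑e⁻¹, by
    have hA' : ∀ a b : Fin k, q2 (e⁻¹ a) < q2 (e⁻¹ b) ↔ a < b := by
      intro a b; simpa using hB (e⁻¹ a) (e⁻¹ b)
    have hB' : ∀ a b : Fin k, q1 a < q1 b ↔ e⁻¹ a < e⁻¹ b := by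
      intro a b; simpa using hA (e⁻¹ a) (e⁻¹ b)
    have := isOcc_map q2 q1 e⁻¹ hA' hB' p⁻¹ g.1 g.2
    simpa using this⟩
  left_inv f := by ext x; simp
  right_inv g := by ext x; simp

lemma occCnt_inv {n k : ℕ} (q1 q2 : Fin k → ℕ) (e : Equiv.Perm (Fin k))
    (hA : ∀ a b : Fin k, q1 (e a) < q1 (e b) ↔ a < b)
    (hB : ∀ a b : Fin k, q2 a < q2 b ↔ e a < e b)
    (p : Equiv.Perm (Fin n)) : occCnt q1 p = occCnt q2 p⁻¹ :=
  Nat.card_congr (occEquiv q1 q2 e hA hB p)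

def e132 : Equiv.Perm (Fin 3) :=
  ⟨![0, 2, 1], ![0, 2, 1], by intro x; fin_cases x <;> rfl, by intro x; fin_cases x <;> rfl⟩

def e231 : Equiv.Perm (Fin 3) :=
  ⟨![2, 0, 1], ![1, 2, 0], by intro x; fin_cases x <;> rfl, by intro x; fin_cases x <;> rfl⟩

lemma avoids_inv {n : ℕ} (p : Equiv.Perm (Fin n)) : Avoids132 p ↔ Avoids132 p⁻¹ := by
  have key : ∀ r : Equiv.Perm (Fin n),
      ContainsPat (![1, 3, 2] : Fin 3 → ℕ) r → ContainsPat (![1, 3, 2] : Fin 3 → ℕ) r⁻¹ := by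
    intro r ⟨f, hf⟩
    exact ⟨⇑r ∘ f ∘ ⇑e132,
      isOcc_map _ _ e132 (by decide) (by decide) r f hf⟩
  constructor
  · intro h hc
    exact h (by simpa using key p⁻¹ hc)
  · intro h hc
    exact h (key p hc)

theorem stmt_0 : ∀ n : ℕ, 0 < n →
    S132 n (![2, 3, 1] : Fin 3 → ℕ) = S132 n (![3, 1, 2] : Fin 3 → ℕ) := by
  intro n _
  classical
  unfold S132
  have h1 : ∀ p : Equiv.Perm (Fin n),
      occCnt (![2, 3, 1] : Fin 3 → ℕ) p = occCnt (![3, 1, 2] : Fin 3 → ℕ) p⁻¹ :=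
    fun p => occCnt_inv _ _ e231 (by decide) (by decide) p
  rw [Finset.sum_congr rfl (fun p _ => h1 p)]
  exact Finset.sum_equiv (Equiv.inv (Equiv.Perm (Fin n)))
    (by intro p; simp [avoids_inv p]) (by intro p _; rfl)
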